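/- Let Ω ⊆ ℂⁿ be an open set and let g : Ω → Matrix(n,n,ℂ) be a map assigning to each p ∈ Ω a positive definite Hermitian matrix g(p); write ‖v‖²_{g,p} = Re(v* · g(p) · v) for v ∈ ℂⁿ. Suppose there exist r > 0 and C > 0 such that for every p ∈ Ω there is a holomorphic map ψ : B(0,r) → Ω from the Euclidean ball B(0,r) ⊆ ℂⁿ with ψ(0) = p, Dψ(0) invertible, and ‖Dψ(w)u‖²_{g,ψ(w)} ≥ C⁻¹·‖u‖² for all w ∈ B(0,r) and u ∈ ℂⁿ. Then the Carathéodory–Reiffen metric satisfies γ_Ω(p; v) ≤ (√C/r)·‖v‖_{g,p} for every p ∈ Ω and v ∈ ℂⁿ. -/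

import Mathlib

open scoped ComplexOrder

/-- The Carathéodory–Reiffen metric of `Ω`:
`γ_Ω(z; v) = sup { |Df(z)v| : f : Ω → ℂ holomorphic, |f| < 1 on Ω }`. -/
noncomputable def caratheodoryReiffen {E : Type*} [NormedAddCommGroup E] [NormedSpace ℂ E]
    (Ω : Set E) (z v : E) : ℝ :=
  sSup {t : ℝ | ∃ f : E → ℂ, DifferentiableOn ℂ f Ω ∧
    (∀ w ∈ Ω, ‖f w‖ < 1) ∧ t = ‖fderiv ℂ f z v‖}

/-- The squared length `‖v‖²_{g,p} = Re(v* · g(p) · v)` of a tangent vector `v`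
with respect to a Hermitian metric `g` given by a matrix field. -/
noncomputable def gNormSq {n : ℕ} (g : EuclideanSpace ℂ (Fin n) → Matrix (Fin n) (Fin n) ℂ)
    (p v : EuclideanSpace ℂ (Fin n)) : ℝ :=
  (∑ i, ∑ j, (starRingEnd ℂ) (v i) * g p i j * v j).re

/-- The lower metric bound of quasi-bounded geometry implies the upper bound
`γ_Ω(p; v) ≤ (√C/r)·‖v‖_{g,p}` for the Carathéodory–Reiffen metric. -/
theorem caratheodoryReiffen_le_of_quasi_bounded {n : ℕ}
    (Ω : Set (EuclideanSpace ℂ (Fin n))) (hΩ : IsOpen Ω)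
    (g : EuclideanSpace ℂ (Fin n) → Matrix (Fin n) (Fin n) ℂ)
    (hg : ∀ p ∈ Ω, (g p).PosDef)
    (r C : ℝ) (hr : 0 < r) (hC : 0 < C)
    (hquasi : ∀ p ∈ Ω, ∃ ψ : EuclideanSpace ℂ (Fin n) → EuclideanSpace ℂ (Fin n),
      DifferentiableOn ℂ ψ (Metric.ball 0 r) ∧
      (∀ w ∈ Metric.ball (0 : EuclideanSpace ℂ (Fin n)) r, ψ w ∈ Ω) ∧
      ψ 0 = p ∧ Function.Bijective (fderiv ℂ ψ 0) ∧
      ∀ w ∈ Metric.ball (0 : EuclideanSpace ℂ (Fin n)) r,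
        ∀ u : EuclideanSpace ℂ (Fin n),
          gNormSq g (ψ w) (fderiv ℂ ψ w u) ≥ C⁻¹ * ‖u‖ ^ 2) :
    ∀ p ∈ Ω, ∀ v : EuclideanSpace ℂ (Fin n),
      caratheodoryReiffen Ω p v ≤ (Real.sqrt C / r) * Real.sqrt (gNormSq g p v) := by
  intro p hp v
  obtain ⟨ψ, hψd, hψΩ, hψ0, hψbij, hψg⟩ := hquasi p hp
  obtain ⟨u, hu⟩ := hψbij.2 v
  have h0r : (0 : EuclideanSpace ℂ (Fin n)) ∈ Metric.ball (0 : EuclideanSpace ℂ (Fin n)) r := by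
    simpa using hr
  -- bound on ‖u‖
  have hgv : C⁻¹ * ‖u‖ ^ 2 ≤ gNormSq g p v := by
    have := hψg 0 h0r u
    rwa [hu, hψ0] at this
  have hg0 : 0 ≤ gNormSq g p v :=
    le_trans (by positivity) hgv
  have hub : ‖u‖ ≤ Real.sqrt C * Real.sqrt (gNormSq g p v) := by
    rw [← Real.sqrt_mul hC.le]
    have h1 : ‖u‖ ^ 2 ≤ C * gNormSq g p v := by
      have h2 := mul_le_mul_of_nonneg_left hgv hC.le
      rwa [← mul_assoc, mul_inv_cancel₀ hC.ne', one_mul] at h2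
    calc ‖u‖ = Real.sqrt (‖u‖ ^ 2) := by rw [Real.sqrt_sq (norm_nonneg u)]
      _ ≤ Real.sqrt (C * gNormSq g p v) := Real.sqrt_le_sqrt h1
  have hRHS : 0 ≤ Real.sqrt C / r * Real.sqrt (gNormSq g p v) := by positivity
  apply Real.sSup_le _ hRHS
  rintro t ⟨f, hfd, hfb, rfl⟩
  -- main bound: |Df(p)v| ≤ ‖u‖ / r
  have key : ‖fderiv ℂ f p v‖ ≤ ‖u‖ / r := by
    rcases eq_or_ne u 0 with hu0 | hu0
    · have : v = 0 := by rw [← hu, hu0, map_zero]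
      simp [this, hu0]
    have hun : (0 : ℝ) < ‖u‖ := norm_pos_iff.mpr hu0
    set ρ : ℝ := r / ‖u‖ with hρ
    have hρ0 : 0 < ρ := div_pos hr hun
    set L : ℂ →L[ℂ] EuclideanSpace ℂ (Fin n) := ContinuousLinearMap.toSpanSingleton ℂ u with hL
    set F : ℂ → ℂ := fun z => f (ψ (z • u)) with hF
    -- membership lemma
    have hmem : ∀ z : ℂ, z ∈ Metric.ball (0 : ℂ) ρ →
        z • u ∈ Metric.ball (0 : EuclideanSpace ℂ (Fin n)) r := by
      intro z hz
      simp only [Metric.mem_ball, dist_zero_right] at hz ⊢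
      rw [norm_smul]
      calc ‖z‖ * ‖u‖ < ρ * ‖u‖ := by
            exact mul_lt_mul_of_pos_right hz hun
        _ = r := by rw [hρ, div_mul_cancel₀ r hun.ne']
    -- F differentiable on ball 0 ρ
    have hFd : DifferentiableOn ℂ F (Metric.ball (0 : ℂ) ρ) := by
      intro z hz
      have h1 : DifferentiableAt ℂ ψ (z • u) :=
        hψd.differentiableAt (Metric.isOpen_ball.mem_nhds (hmem z hz))
      have h2 : DifferentiableAt ℂ f (ψ (z • u)) :=
        hfd.differentiableAt (hΩ.mem_nhds (hψΩ _ (hmem z hz)))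
      exact ((h2.comp _ h1).comp z (L.differentiableAt)).differentiableWithinAt
    -- derivative of F at 0
    have hFdu : HasDerivAt F (fderiv ℂ f p v) 0 := by
      have h1 : HasFDerivAt ψ (fderiv ℂ ψ 0) ((0 : ℂ) • u) := by
        rw [zero_smul]
        exact (hψd.differentiableAt (Metric.isOpen_ball.mem_nhds h0r)).hasFDerivAt
      have h2 : HasFDerivAt f (fderiv ℂ f p) (ψ ((0 : ℂ) • u)) := by
        rw [zero_smul, hψ0]
        exact (hfd.differentiableAt (hΩ.mem_nhds hp)).hasFDerivAt
      have h3 : HasFDerivAt (fun z : ℂ => z • u) (L : ℂ →L[ℂ] EuclideanSpace ℂ (Fin n)) 0 :=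
        L.hasFDerivAt
      have h4 := (h2.comp ((0:ℂ) • u) h1).comp (0 : ℂ) h3
      have h5 : HasDerivAt F
          (((fderiv ℂ f p).comp ((fderiv ℂ ψ 0).comp L)) 1) 0 := h4.hasDerivAt
      simpa [L, ContinuousLinearMap.toSpanSingleton_apply, hu] using h5
    -- symmetrized function
    set G : ℂ → ℂ := fun z => (F z - F (-z)) / 2 with hG
    have hGd : DifferentiableOn ℂ G (Metric.ball (0 : ℂ) ρ) := by
      intro z hz
      have hz' : -z ∈ Metric.ball (0 : ℂ) ρ := by
        simpa [Metric.mem_ball] using hz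
      have h1 : DifferentiableAt ℂ F z :=
        hFd.differentiableAt (Metric.isOpen_ball.mem_nhds hz)
      have h2 : DifferentiableAt ℂ F (-z) :=
        hFd.differentiableAt (Metric.isOpen_ball.mem_nhds hz')
      exact ((h1.sub (h2.comp z differentiable_neg.differentiableAt)).div_const 2).differentiableWithinAt
    have hG0 : G 0 = 0 := by simp [hG]
    have hGmaps : Set.MapsTo G (Metric.ball (0 : ℂ) ρ) (Metric.ball (G 0) 1) := by
      intro z hz
      have hz' : -z ∈ Metric.ball (0 : ℂ) ρ := by simpa [Metric.mem_ball] using hz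
      have h1 : ‖F z‖ < 1 := hfb _ (hψΩ _ (hmem z hz))
      have h2 : ‖F (-z)‖ < 1 := hfb _ (hψΩ _ (hmem _ hz'))
      simp only [hG0, Metric.mem_ball, dist_zero_right]
      calc ‖(F z - F (-z)) / 2‖ ≤ (‖F z‖ + ‖F (-z)‖) / 2 := by
            rw [norm_div]
            gcongr
            · exact norm_sub_le _ _
            · simp
        _ < 1 := by
            linarith
    -- derivative of G
    have hGdu : HasDerivAt G (fderiv ℂ f p v) 0 := by
      have h1 : HasDerivAt (fun z : ℂ => F (-z)) (-(fderiv ℂ f p v)) 0 := by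
        have hneg : HasDerivAt (fun z : ℂ => -z) (-1 : ℂ) 0 := (hasDerivAt_id (0:ℂ)).neg
        have hF' : HasDerivAt F (fderiv ℂ f p v) (-(0:ℂ)) := by rw [neg_zero]; exact hFdu
        have h := hF'.comp (0:ℂ) hneg
        simp only [mul_neg, mul_one] at h
        exact h
      have h2 := ((hFdu.sub h1).div_const 2)
      have : (fderiv ℂ f p v - -(fderiv ℂ f p v)) / 2 = fderiv ℂ f p v := by ring
      rwa [this] at h2
    have hSch := Complex.norm_deriv_le_div_of_mapsTo_ball hGd (hGmaps.mono_right Metric.ball_subset_closedBall) hρ0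
    rw [hGdu.deriv] at hSch
    calc ‖fderiv ℂ f p v‖ ≤ 1 / ρ := hSch
      _ = ‖u‖ / r := by rw [hρ]; field_simp
  calc ‖fderiv ℂ f p v‖ ≤ ‖u‖ / r := key
    _ ≤ Real.sqrt C * Real.sqrt (gNormSq g p v) / r := by gcongr
    _ = Real.sqrt C / r * Real.sqrt (gNormSq g p v) := by ring
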